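/- Let A be the cubical 3-matrix of order 6 with a_{1,2,3} = a_{2,3,4} = a_{3,4,5} = a_{4,5,6} = a_{5,6,1} = a_{6,1,2} = 1 and all other entries zero. Then the spectral radius of A is 1, and -1 is an eigenvalue of A with eigenvector (e^{2πi/6}, e^{4πi/6}, e^{6πi/6}, e^{8πi/6}, e^{10πi/6}, e^{12πi/6}). In particular, the conclusion of the theorem that -ρ(A) being an eigenvalue forces r even fails for non-symmetric matrices. -/

import Mathlib

open Finset

/-- `λ ∈ ℂ` is an eigenvalue of the complex cubical `r`-matrix `A` with eigenvector `x`. -/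
def IsEigenpair {r n : ℕ} (hr : 0 < r) (A : (Fin r → Fin n) → ℂ)
    (lam : ℂ) (x : Fin n → ℂ) : Prop :=
  x ≠ 0 ∧ ∀ k : Fin n, lam * x k ^ (r - 1) =
    ∑ i : Fin r → Fin n, if i ⟨0, hr⟩ = k then
      A i * ∏ j ∈ Finset.univ.erase (⟨0, hr⟩ : Fin r), x (i j) else 0

abbrev CycS6 : Finset (Fin 6 × Fin 6 × Fin 6) :=
  {(0,1,2), (1,2,3), (2,3,4), (3,4,5), (4,5,0), (5,0,1)}

lemma key_sum (A : (Fin 3 → Fin 6) → ℂ)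
    (hA : ∀ i : Fin 3 → Fin 6, A i = if (i 0, i 1, i 2) ∈ CycS6 then 1 else 0)
    (x : Fin 6 → ℂ) (k : Fin 6) :
    (∑ i : Fin 3 → Fin 6, if i ⟨0, by norm_num⟩ = k then
      A i * ∏ j ∈ Finset.univ.erase (⟨0, by norm_num⟩ : Fin 3), x (i j) else 0)
      = x (k+1) * x (k+2) := by
  have h0 : (⟨0, by norm_num⟩ : Fin 3) = 0 := rfl
  have herase : (Finset.univ.erase (0 : Fin 3)) = {1, 2} := by decide
  have hmem : ∀ a b c : Fin 6, (a, b, c) ∈ CycS6 → b = a + 1 ∧ c = a + 2 := by decide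
  have hself : ∀ a : Fin 6, (a, a + 1, a + 2) ∈ CycS6 := by decide
  rw [Finset.sum_eq_single (![k, k+1, k+2])]
  · simp [h0, hA, herase, hself k]
  · intro b _ hb
    simp only [h0, herase]
    by_cases hb0 : b 0 = k
    · rw [if_pos hb0, hA]
      rw [if_neg, zero_mul]
      intro hm
      rw [hb0] at hm
      obtain ⟨h1, h2⟩ := hmem _ _ _ hm
      exact hb (by funext j; fin_cases j <;> simp [hb0, h1, h2])
    · rw [if_neg hb0]
  · intro h; exact absurd (Finset.mem_univ _) h

lemma pair_iff (A : (Fin 3 → Fin 6) → ℂ)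
    (hA : ∀ i : Fin 3 → Fin 6, A i = if (i 0, i 1, i 2) ∈ CycS6 then 1 else 0)
    (lam : ℂ) (x : Fin 6 → ℂ) :
    IsEigenpair (by norm_num) A lam x ↔
      x ≠ 0 ∧ ∀ k : Fin 6, lam * x k ^ 2 = x (k+1) * x (k+2) := by
  unfold IsEigenpair
  refine and_congr Iff.rfl (forall_congr' fun k => ?_)
  rw [key_sum A hA x k]

lemma neg_exp (a b : ℂ) (n : ℤ) (h : b = a + (2*n+1) * (Real.pi * Complex.I)) :
    Complex.exp b = - Complex.exp a := by
  rw [h, Complex.exp_add,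
    show ((2*(n:ℂ)+1) * ((Real.pi:ℂ) * Complex.I)) = ((2*n+1 : ℤ) : ℂ) * ((Real.pi:ℂ) * Complex.I)
      by push_cast; ring,
    Complex.exp_int_mul, Complex.exp_pi_mul_I]
  rw [Odd.neg_one_zpow ⟨n, by ring⟩, mul_neg_one]

lemma neg_one_pair (A : (Fin 3 → Fin 6) → ℂ)
    (hA : ∀ i : Fin 3 → Fin 6, A i = if (i 0, i 1, i 2) ∈ CycS6 then 1 else 0) :
    IsEigenpair (by norm_num) A (-1)
      (fun k : Fin 6 =>
        Complex.exp (2 * Real.pi * Complex.I * ((k : ℕ) + 1) / 6)) := by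
  rw [pair_iff A hA]
  constructor
  · intro h
    have := congrFun h 0
    simpa using Complex.exp_ne_zero _ this
  · intro k
    fin_cases k
    · show (-1) * Complex.exp (2*(Real.pi:ℂ)*Complex.I*(((0:ℕ):ℂ)+1)/6) ^ 2
        = Complex.exp (2*(Real.pi:ℂ)*Complex.I*(((1:ℕ):ℂ)+1)/6) *
          Complex.exp (2*(Real.pi:ℂ)*Complex.I*(((2:ℕ):ℂ)+1)/6)
      rw [sq, ← Complex.exp_add, ← Complex.exp_add, neg_one_mul]
      exact (neg_exp _ _ 0 (by push_cast; ring)).symm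
    · show (-1) * Complex.exp (2*(Real.pi:ℂ)*Complex.I*(((1:ℕ):ℂ)+1)/6) ^ 2
        = Complex.exp (2*(Real.pi:ℂ)*Complex.I*(((2:ℕ):ℂ)+1)/6) *
          Complex.exp (2*(Real.pi:ℂ)*Complex.I*(((3:ℕ):ℂ)+1)/6)
      rw [sq, ← Complex.exp_add, ← Complex.exp_add, neg_one_mul]
      exact (neg_exp _ _ 0 (by push_cast; ring)).symm
    · show (-1) * Complex.exp (2*(Real.pi:ℂ)*Complex.I*(((2:ℕ):ℂ)+1)/6) ^ 2
        = Complex.exp (2*(Real.pi:ℂ)*Complex.I*(((3:ℕ):ℂ)+1)/6) *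
          Complex.exp (2*(Real.pi:ℂ)*Complex.I*(((4:ℕ):ℂ)+1)/6)
      rw [sq, ← Complex.exp_add, ← Complex.exp_add, neg_one_mul]
      exact (neg_exp _ _ 0 (by push_cast; ring)).symm
    · show (-1) * Complex.exp (2*(Real.pi:ℂ)*Complex.I*(((3:ℕ):ℂ)+1)/6) ^ 2
        = Complex.exp (2*(Real.pi:ℂ)*Complex.I*(((4:ℕ):ℂ)+1)/6) *
          Complex.exp (2*(Real.pi:ℂ)*Complex.I*(((5:ℕ):ℂ)+1)/6)
      rw [sq, ← Complex.exp_add, ← Complex.exp_add, neg_one_mul]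
      exact (neg_exp _ _ 0 (by push_cast; ring)).symm
    · show (-1) * Complex.exp (2*(Real.pi:ℂ)*Complex.I*(((4:ℕ):ℂ)+1)/6) ^ 2
        = Complex.exp (2*(Real.pi:ℂ)*Complex.I*(((5:ℕ):ℂ)+1)/6) *
          Complex.exp (2*(Real.pi:ℂ)*Complex.I*(((0:ℕ):ℂ)+1)/6)
      rw [sq, ← Complex.exp_add, ← Complex.exp_add, neg_one_mul]
      exact (neg_exp _ _ (-1) (by push_cast; ring)).symm
    · show (-1) * Complex.exp (2*(Real.pi:ℂ)*Complex.I*(((5:ℕ):ℂ)+1)/6) ^ 2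
        = Complex.exp (2*(Real.pi:ℂ)*Complex.I*(((0:ℕ):ℂ)+1)/6) *
          Complex.exp (2*(Real.pi:ℂ)*Complex.I*(((1:ℕ):ℂ)+1)/6)
      rw [sq, ← Complex.exp_add, ← Complex.exp_add, neg_one_mul]
      exact (neg_exp _ _ (-2) (by push_cast; ring)).symm

theorem nonsymmetric_counterexample
    (A : (Fin 3 → Fin 6) → ℂ)
    (hA : ∀ i : Fin 3 → Fin 6, A i =
      if (i 0, i 1, i 2) ∈
        ({(0,1,2), (1,2,3), (2,3,4), (3,4,5), (4,5,0), (5,0,1)} :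
          Finset (Fin 6 × Fin 6 × Fin 6))
      then 1 else 0) :
    IsGreatest {t : ℝ | ∃ (lam : ℂ) (x : Fin 6 → ℂ),
        IsEigenpair (by norm_num) A lam x ∧ ‖lam‖ = t} 1 ∧
      IsEigenpair (by norm_num) A (-1)
        (fun k : Fin 6 =>
          Complex.exp (2 * Real.pi * Complex.I * ((k : ℕ) + 1) / 6)) := by
  have hpair := neg_one_pair A hA
  refine ⟨⟨⟨-1, _, hpair, by simp⟩, ?_⟩, hpair⟩
  rintro t ⟨lam, x, hp, rfl⟩
  rw [pair_iff A hA] at hp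
  obtain ⟨hx, heq⟩ := hp
  rcases eq_or_ne lam 0 with h0 | hlam
  · simp [h0]
  · -- every coordinate is nonzero
    open Fin.NatCast in
    have hnz : ∀ k, x k ≠ 0 := by
      by_contra hc
      push_neg at hc
      obtain ⟨k, hk⟩ := hc
      have step : ∀ j : Fin 6, x (j+1) = 0 → x j = 0 := by
        intro j hj
        have h : lam * x j ^ 2 = 0 := by rw [heq j, hj, zero_mul]
        rcases mul_eq_zero.1 h with h | h
        · exact absurd h hlam
        · exact pow_eq_zero_iff (by norm_num) |>.mp h
      have all : ∀ m : ℕ, x (k - m) = 0 := by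
        intro m
        induction m with
        | zero => simpa using hk
        | succ p ih =>
          apply step
          have h : (k - (↑(p+1) : Fin 6) + 1 : Fin 6) = k - p := by push_cast; abel
          rw [h]; exact ih
      apply hx
      funext j
      have h := all ((k - j : Fin 6) : ℕ)
      rwa [Fin.cast_val_eq_self, sub_sub_cancel] at h
    have hP : (∏ k, x k) ≠ 0 := Finset.prod_ne_zero_iff.2 fun k _ => hnz k
    have shift : ∀ c : Fin 6, (∏ k : Fin 6, x (k + c)) = ∏ k : Fin 6, x k :=
      fun c => Fintype.prod_equiv (Equiv.addRight c) _ _ fun k => rfl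
    have hprod : lam ^ 6 * (∏ k, x k) ^ 2 = (∏ k, x k) ^ 2 := by
      calc lam ^ 6 * (∏ k, x k) ^ 2 = ∏ k : Fin 6, (lam * x k ^ 2) := by
            rw [Finset.prod_mul_distrib, Finset.prod_const, Finset.prod_pow]
            simp
        _ = ∏ k : Fin 6, (x (k + 1) * x (k + 2)) := Finset.prod_congr rfl fun k _ => heq k
        _ = (∏ k : Fin 6, x (k + 1)) * ∏ k : Fin 6, x (k + 2) := Finset.prod_mul_distrib
        _ = (∏ k, x k) ^ 2 := by rw [shift 1, shift 2, sq]
    have h6 : lam ^ 6 = 1 := by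
      have := mul_right_cancel₀ (pow_ne_zero 2 hP) (hprod.trans (one_mul _).symm)
      exact this
    have habs : ‖lam‖ ^ 6 = 1 := by rw [← norm_pow, h6, norm_one]
    have : ‖lam‖ = 1 := by
      have := (pow_left_inj₀ (norm_nonneg lam) zero_le_one (n := 6) (by norm_num))
      rw [← this]; simpa using habs
    rw [this]
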